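/- arXiv:1809.02229 — 7 statements merged into one kernel-verified Lean document; each statement's English description precedes it below -/
import Mathlib

section
/- Let V be a commutative quantale and X a set equipped with, for every r ∈ V, a binary relation F(r) on X such that: the identity relation is contained in F(e); F(r) · F(s) ⊆ F(r⊗s); F(r) ⊆ F(s) whenever s ≤ r; and F(⋁ᵢ rᵢ) ⊇ ⋂ᵢ F(rᵢ) for all families (rᵢ). Then defining d(x,y) = ⋁{r ∈ V | (x,y) ∈ F(r)} makes (X, d) a V-category, and moreover (x,y) ∈ F(r) holds if and only if r ≤ d(x,y). -/
/-- a continuous relational presheaf gives rise to a V-category. -/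
theorem relational_presheaf_to_Vcat {V X : Type*} [CompleteLattice V]
    (t : V → V → V) (e : V) (F : V → Set (X × X))
    (hcomm : ∀ a b, t a b = t b a)
    (hassoc : ∀ a b c, t (t a b) c = t a (t b c))
    (hunit : ∀ a, t e a = a)
    (hsup : ∀ (a : V) (S : Set V), t a (sSup S) = ⨆ s ∈ S, t a s)
    (hid : ∀ x : X, (x, x) ∈ F e)
    (hcomp : ∀ (r s : V) (x y z : X), (x, y) ∈ F r → (y, z) ∈ F s → (x, z) ∈ F (t r s))
    (hanti : ∀ r s : V, s ≤ r → F r ⊆ F s)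
    (hcont : ∀ S : Set V, (⋂ r ∈ S, F r) ⊆ F (sSup S)) :
    (∀ x : X, e ≤ sSup {r | (x, x) ∈ F r}) ∧
    (∀ x y z : X,
        t (sSup {r | (x, y) ∈ F r}) (sSup {r | (y, z) ∈ F r}) ≤ sSup {r | (x, z) ∈ F r}) ∧
    (∀ (r : V) (x y : X), (x, y) ∈ F r ↔ r ≤ sSup {s | (x, y) ∈ F s}) := by

  refine ⟨fun x => le_sSup (hid x), fun x y z => ?_, fun r x y => ?_⟩
  · rw [hsup, iSup₂_le_iff]
    intro b hb
    rw [hcomm, hsup, iSup₂_le_iff]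
    intro a ha
    exact le_sSup (show (x, z) ∈ F (t b a) from hcomm a b ▸ hcomp a b x y z ha hb)
  · constructor
    · exact fun h => le_sSup h
    · intro h
      apply hanti _ _ h
      apply hcont
      simp only [Set.mem_iInter]
      exact fun s hs => hs
end

section
/- For a commutative quantale V, the assignment sending a V-category X to its continuous relational presheaf Φ(X), given by Φ(X)(r) = {(x,y) | r ≤ X(x,y)}, and sending a continuous relational presheaf F on a set X to the V-category Ψ(F) with Ψ(F)(x,y) = ⋁{r | (x,y) ∈ F(r)}, gives mutually inverse constructions: Ψ(Φ(X)) = X for every V-category X, and Φ(Ψ(F)) = F for every continuous relational presheaf F. -/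
/-- V-categories and continuous relational presheaves are mutually inverse. -/
theorem Vcat_relpresh_equivalence {V X : Type*} [CompleteLattice V]
    (t : V → V → V) (e : V)
    (hcomm : ∀ a b, t a b = t b a)
    (hassoc : ∀ a b c, t (t a b) c = t a (t b c))
    (hunit : ∀ a, t e a = a)
    (hsup : ∀ (a : V) (S : Set V), t a (sSup S) = ⨆ s ∈ S, t a s) :
    (∀ d : X → X → V,
      (∀ x, e ≤ d x x) →
      (∀ x y z, t (d x y) (d y z) ≤ d x z) →
      ∀ x y : X, sSup {r : V | r ≤ d x y} = d x y) ∧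
    (∀ F : V → Set (X × X),
      (∀ x : X, (x, x) ∈ F e) →
      (∀ (r s : V) (x y z : X), (x, y) ∈ F r → (y, z) ∈ F s → (x, z) ∈ F (t r s)) →
      (∀ r s : V, s ≤ r → F r ⊆ F s) →
      (∀ S : Set V, F (sSup S) = ⋂ r ∈ S, F r) →
      ∀ r : V, F r = {p : X × X | r ≤ sSup {s : V | p ∈ F s}}) := by
  constructor
  · intro d _ _ x y
    exact le_antisymm (sSup_le fun r hr => hr) (le_sSup le_rfl)
  · intro F _ _ hanti hcont r
    ext p
    constructor
    · intro hp
      exact le_sSup hp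
    · intro hp
      apply hanti _ _ hp
      rw [hcont]
      exact Set.mem_iInter₂.mpr fun s hs => hs
end

section
/- Let V be a nontrivial commutative quantale (e ≠ ⊥). The discrete V-category functor D from sets to V-categories, sending a set X to the V-category DX with objects X, hom-values e on the diagonal and ⊥ off the diagonal, is full and faithful in the V-cat-enriched sense (i.e., the canonical comparison between the V-category Set(X,Y)·𝟙 and the V-category of V-functors [DX, DY] is an isomorphism for all sets X, Y) if and only if V is integral, i.e., e = ⊤. -/
open Classical

/-- the discrete functor D : Set → V-cat is fully faithful iff V is integral. -/
theorem discrete_functor_ff_iff_integral {V : Type*} [CompleteLattice V]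
    (t : V → V → V) (e : V)
    (hcomm : ∀ a b, t a b = t b a)
    (hassoc : ∀ a b c, t (t a b) c = t a (t b c))
    (hunit : ∀ a, t e a = a)
    (hsup : ∀ (a : V) (S : Set V), t a (sSup S) = ⨆ s ∈ S, t a s)
    (hnontriv : e ≠ ⊥) :
    (∀ (X Y : Type) (f g : X → Y),
        (if f = g then e else (⊥ : V)) = ⨅ x, (if f x = g x then e else (⊥ : V)))
      ↔ e = ⊤ := by
  constructor
  · intro h
    have := h Empty Empty Empty.elim Empty.elim
    simpa [iInf_of_isEmpty] using this
  · intro he X Y f g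
    by_cases hfg : f = g
    · subst hfg
      simp [he]
    · simp only [if_neg hfg]
      obtain ⟨x, hx⟩ := Function.ne_iff.mp hfg
      have : (⨅ x, (if f x = g x then e else (⊥ : V))) ≤ ⊥ := by
        refine le_trans (iInf_le _ x) ?_
        simp [hx]
      exact (le_bot_iff.mp this).symm
end

section
/- Let V be a commutative quantale, X a set, H an assignment of a V-category HX_r to each relation level, and let the 'shortest path' formula define on the object set of a V-category H X₀ new hom-values by taking the supremum over all finite zig-zag paths of tensors of hom-values in H X₀ interleaved with quantale elements r₁,…,rₙ coming from witnesses. Then the resulting structure H^♯X satisfies: (1) H X₀(A',A) ≤ H^♯X(A',A) for all A', A; (2) e ≤ H^♯X(A,A); and (3) H^♯X(A',A) ⊗ H^♯X(A,A'') ≤ H^♯X(A',A''), i.e., H^♯X is a V-category. -/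
/-- Zig-zag paths: `ZigZag t W R a b v` means there is a path
`(A₀',A₀),(A₁',A₁),…,(Aₙ',Aₙ)` with `a = A₀'`, `b = Aₙ`, witnesses
`(Aᵢ₋₁, Aᵢ') ∈ R rᵢ`, and value
`v = W A₀' A₀ ⊗ r₁ ⊗ W A₁' A₁ ⊗ ⋯ ⊗ rₙ ⊗ W Aₙ' Aₙ`. -/
inductive ZigZag {V S : Type*} (t : V → V → V) (W : S → S → V)
    (R : V → Set (S × S)) : S → S → V → Prop
  | base (a b : S) : ZigZag t W R a b (W a b)
  | step (a b c d : S) (r v : V) :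
      ZigZag t W R a b v → (b, c) ∈ R r → ZigZag t W R a d (t (t v r) (W c d))

/-- the shortest-path formula yields a V-category structure. -/
theorem shortest_path_Vcat {V S : Type*} [CompleteLattice V]
    (t : V → V → V) (e : V) (W : S → S → V) (R : V → Set (S × S))
    (hcomm : ∀ a b, t a b = t b a)
    (hassoc : ∀ a b c, t (t a b) c = t a (t b c))
    (hunit : ∀ a, t e a = a)
    (hsup : ∀ (a : V) (Sv : Set V), t a (sSup Sv) = ⨆ s ∈ Sv, t a s)
    (hWrefl : ∀ a, e ≤ W a a)
    (hWtrans : ∀ a b c, t (W a b) (W b c) ≤ W a c) :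
    (∀ a b : S, W a b ≤ sSup {v | ZigZag t W R a b v}) ∧
    (∀ a : S, e ≤ sSup {v | ZigZag t W R a a v}) ∧
    (∀ a b c : S,
        t (sSup {v | ZigZag t W R a b v}) (sSup {v | ZigZag t W R b c v}) ≤
          sSup {v | ZigZag t W R a c v}) := by
  have hmono : ∀ a x y : V, x ≤ y → t a x ≤ t a y := by
    intro a x y hxy
    have h1 : t a y = ⨆ s ∈ ({x, y} : Set V), t a s := by
      rw [← hsup]
      congr 1
      simp [sSup_pair, sup_eq_right.mpr hxy]
    rw [h1]
    exact le_iSup₂_of_le x (by simp) le_rfl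
  -- glue a zigzag path from a to b with one extra W b c
  have glue : ∀ {a b v}, ZigZag t W R a b v →
      ∀ c, ∃ u, ZigZag t W R a c u ∧ t v (W b c) ≤ u := by
    intro a b v h
    induction h with
    | base b =>
      intro c
      exact ⟨W _ c, .base _ c, hWtrans _ b c⟩
    | step b c d r v hv hr ih =>
      intro c'
      refine ⟨t (t v r) (W c c'), .step _ b c c' r v hv hr, ?_⟩
      rw [hassoc]
      exact hmono _ _ _ (hWtrans c d c')
  -- compose two zigzag paths
  have comp : ∀ {b c w}, ZigZag t W R b c w →
      ∀ {a v}, ZigZag t W R a b v → ∃ u, ZigZag t W R a c u ∧ t v w ≤ u := by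
    intro b c w hw
    induction hw with
    | base c =>
      intro a v hv
      exact glue hv c
    | step c' x d r w hw hr ih =>
      intro a v hv
      obtain ⟨u, hu, hle⟩ := ih hv
      refine ⟨t (t u r) (W x d), .step a c' x d r u hu hr, ?_⟩
      have heq : t v (t (t w r) (W x d)) = t (t (t v w) r) (W x d) := by
        rw [hassoc, hassoc]; exact (hassoc v w _).symm
      rw [heq]
      rw [hcomm _ (W x d), hcomm (t u r) (W x d)]
      apply hmono
      rw [hcomm _ r, hcomm u r]
      exact hmono _ _ _ hle
  refine ⟨fun a b => le_sSup (ZigZag.base a b), fun a => (hWrefl a).trans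
    (le_sSup (ZigZag.base a a)), fun a b c => ?_⟩
  rw [hsup]
  apply iSup₂_le
  intro w hw
  rw [hcomm, hsup]
  apply iSup₂_le
  intro v hv
  rw [hcomm]
  obtain ⟨u, hu, hle⟩ := comp hw hv
  exact hle.trans (le_sSup hu)
end

section
/- Let V be a completely distributive commutative quantale and X a V-category with object set X₀. Define for subsets A', A ⊆ X₀ the value P(A',A) = ⋁{s ∈ V | (∀x'∈A' ∃x∈A, s ≤ X(x',x)) ∧ (∀x∈A ∃x'∈A', s ≤ X(x',x))}. Then P(A',A) = (⋀_{x'∈A'} ⋁_{x∈A} X(x',x)) ⊓ (⋀_{x∈A} ⋁_{x'∈A'} X(x',x)) for all A', A. -/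
/-- The totally-below relation. -/
def TotallyBelow {V : Type*} [CompleteLattice V] (s r : V) : Prop :=
  ∀ D : Set V, IsLowerSet D → r ≤ sSup D → s ∈ D

/-- over a completely distributive quantale, the sup-of-simulations formula
for the Pompeiu–Hausdorff distance coincides with the inf-sup formula. -/
theorem hausdorff_distance_formula {V X : Type*} [CompleteLattice V]
    (t : V → V → V) (e : V) (d : X → X → V)
    (hcomm : ∀ a b, t a b = t b a)
    (hassoc : ∀ a b c, t (t a b) c = t a (t b c))
    (hunit : ∀ a, t e a = a)
    (hsup : ∀ (a : V) (S : Set V), t a (sSup S) = ⨆ s ∈ S, t a s)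
    (hcd : ∀ r : V, r = sSup {s | TotallyBelow s r})
    (hrefl : ∀ x, e ≤ d x x)
    (htrans : ∀ x y z, t (d x y) (d y z) ≤ d x z) :
    ∀ A' A : Set X,
      sSup {s : V | (∀ x' ∈ A', ∃ x ∈ A, s ≤ d x' x) ∧ (∀ x ∈ A, ∃ x' ∈ A', s ≤ d x' x)} =
        (⨅ x' ∈ A', ⨆ x ∈ A, d x' x) ⊓ (⨅ x ∈ A, ⨆ x' ∈ A', d x' x) := by
  intro A' A
  apply le_antisymm
  · refine sSup_le fun s hs => le_inf ?_ ?_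
    · refine le_iInf₂ fun x' hx' => ?_
      obtain ⟨x, hx, hle⟩ := hs.1 x' hx'
      exact hle.trans (le_iSup₂ (f := fun x _ => d x' x) x hx)
    · refine le_iInf₂ fun x hx => ?_
      obtain ⟨x', hx', hle⟩ := hs.2 x hx
      exact hle.trans (le_iSup₂ (f := fun x' _ => d x' x) x' hx')
  · set r := (⨅ x' ∈ A', ⨆ x ∈ A, d x' x) ⊓ (⨅ x ∈ A, ⨆ x' ∈ A', d x' x) with hr
    conv_lhs => rw [hcd r]
    refine sSup_le_sSup fun s hs => ?_
    constructor
    · intro x' hx'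
      have h1 : r ≤ sSup {v | ∃ x ∈ A, v ≤ d x' x} := by
        refine le_trans (inf_le_left.trans (iInf₂_le x' hx')) (iSup₂_le fun x hx => ?_)
        exact le_sSup ⟨x, hx, le_rfl⟩
      exact hs _ (fun a b hab hm => hm.imp fun x ⟨hx, h⟩ => ⟨hx, hab.trans h⟩) h1
    · intro x hx
      have h1 : r ≤ sSup {v | ∃ x' ∈ A', v ≤ d x' x} := by
        refine le_trans (inf_le_right.trans (iInf₂_le x hx)) (iSup₂_le fun x' hx' => ?_)
        exact le_sSup ⟨x', hx', le_rfl⟩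
      exact hs _ (fun a b hab hm => hm.imp fun x' ⟨hx', h⟩ => ⟨hx', hab.trans h⟩) h1
end

section
/- Let V be a completely distributive commutative quantale and X a V-category. The Pompeiu–Hausdorff distance on subsets, P(A',A) = (⋀_{x'∈A'} ⋁_{x∈A} X(x',x)) ⊓ (⋀_{x∈A} ⋁_{x'∈A'} X(x',x)), makes the powerset of the objects of X into a V-category: e ≤ P(A,A) and P(A,B) ⊗ P(B,C) ≤ P(A,C) for all subsets A, B, C. -/
/-- the Pompeiu–Hausdorff distance makes the powerset a V-category. -/
theorem hausdorff_Vcat {V X : Type*} [CompleteLattice V]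
    (t : V → V → V) (e : V) (d : X → X → V)
    (hcomm : ∀ a b, t a b = t b a)
    (hassoc : ∀ a b c, t (t a b) c = t a (t b c))
    (hunit : ∀ a, t e a = a)
    (hsup : ∀ (a : V) (S : Set V), t a (sSup S) = ⨆ s ∈ S, t a s)
    (hcd : ∀ r : V, r = sSup {s | TotallyBelow s r})
    (hrefl : ∀ x, e ≤ d x x)
    (htrans : ∀ x y z, t (d x y) (d y z) ≤ d x z) :
    (∀ A : Set X,
        e ≤ (⨅ x' ∈ A, ⨆ x ∈ A, d x' x) ⊓ (⨅ x ∈ A, ⨆ x' ∈ A, d x' x)) ∧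
    (∀ A B C : Set X,
        t ((⨅ x' ∈ A, ⨆ x ∈ B, d x' x) ⊓ (⨅ x ∈ B, ⨆ x' ∈ A, d x' x))
          ((⨅ x' ∈ B, ⨆ x ∈ C, d x' x) ⊓ (⨅ x ∈ C, ⨆ x' ∈ B, d x' x)) ≤
        (⨅ x' ∈ A, ⨆ x ∈ C, d x' x) ⊓ (⨅ x ∈ C, ⨆ x' ∈ A, d x' x)) := by

  have hmono : ∀ c a b : V, a ≤ b → t c a ≤ t c b := by
    intro c a b hab
    have hs : sSup ({a, b} : Set V) = b := by
      rw [sSup_pair, sup_eq_right.mpr hab]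
    calc t c a ≤ ⨆ s ∈ ({a, b} : Set V), t c s := le_biSup _ (by simp)
      _ = t c (sSup ({a, b} : Set V)) := (hsup c _).symm
      _ = t c b := by rw [hs]
  have hmono2 : ∀ a b a' b' : V, a ≤ a' → b ≤ b' → t a b ≤ t a' b' := by
    intro a b a' b' h1 h2
    calc t a b ≤ t a b' := hmono a b b' h2
      _ = t b' a := hcomm a b'
      _ ≤ t b' a' := hmono b' a a' h1
      _ = t a' b' := hcomm b' a'
  have hsup' : ∀ (a : V) {ι : Type _} (s : Set ι) (f : ι → V),
      t a (⨆ i ∈ s, f i) = ⨆ i ∈ s, t a (f i) := by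
    intro a ι s f
    rw [← sSup_image, hsup, iSup_image]
  have key : ∀ (f : X → X → V), (∀ x y z, t (f x y) (f y z) ≤ f x z) →
      ∀ A B C : Set X,
        t (⨅ a ∈ A, ⨆ b ∈ B, f a b) (⨅ b ∈ B, ⨆ c ∈ C, f b c) ≤
          ⨅ a ∈ A, ⨆ c ∈ C, f a c := by
    intro f hf A B C
    refine le_iInf fun a => le_iInf fun ha => ?_
    have h1 : (⨅ a' ∈ A, ⨆ b ∈ B, f a' b) ≤ ⨆ b ∈ B, f a b := biInf_le _ ha
    calc t (⨅ a' ∈ A, ⨆ b ∈ B, f a' b) (⨅ b ∈ B, ⨆ c ∈ C, f b c)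
        ≤ t (⨅ b ∈ B, ⨆ c ∈ C, f b c) (⨆ b ∈ B, f a b) := by
          rw [hcomm]; exact hmono _ _ _ h1
      _ = ⨆ b ∈ B, t (⨅ b' ∈ B, ⨆ c ∈ C, f b' c) (f a b) := hsup' _ _ _
      _ ≤ ⨆ c ∈ C, f a c := by
          refine iSup_le fun b => iSup_le fun hb => ?_
          calc t (⨅ b' ∈ B, ⨆ c ∈ C, f b' c) (f a b)
              ≤ t (⨆ c ∈ C, f b c) (f a b) := hmono2 _ _ _ _ (biInf_le _ hb) le_rfl
            _ = t (f a b) (⨆ c ∈ C, f b c) := hcomm _ _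
            _ = ⨆ c ∈ C, t (f a b) (f b c) := hsup' _ _ _
            _ ≤ ⨆ c ∈ C, f a c := by
                refine iSup_le fun c => iSup_le fun hc => ?_
                exact le_trans (hf a b c) (le_biSup _ hc)
  constructor
  · intro A
    refine le_inf ?_ ?_
    · exact le_iInf fun x => le_iInf fun hx => le_trans (hrefl x) (le_biSup _ hx)
    · exact le_iInf fun x => le_iInf fun hx =>
        le_trans (hrefl x) (le_biSup (fun x' => d x' x) hx)
  · intro A B C
    refine le_inf ?_ ?_
    · exact le_trans (hmono2 _ _ _ _ inf_le_left inf_le_left) (key d htrans A B C)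
    · have hf' : ∀ x y z, t (d y x) (d z y) ≤ d z x := by
        intro x y z
        rw [hcomm]; exact htrans z y x
      have := key (fun x y => d y x) hf' C B A
      calc t ((⨅ x' ∈ A, ⨆ x ∈ B, d x' x) ⊓ (⨅ x ∈ B, ⨆ x' ∈ A, d x' x))
            ((⨅ x' ∈ B, ⨆ x ∈ C, d x' x) ⊓ (⨅ x ∈ C, ⨆ x' ∈ B, d x' x))
          ≤ t (⨅ x ∈ B, ⨆ x' ∈ A, d x' x) (⨅ x ∈ C, ⨆ x' ∈ B, d x' x) :=
            hmono2 _ _ _ _ inf_le_right inf_le_right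
        _ = t (⨅ x ∈ C, ⨆ x' ∈ B, d x' x) (⨅ x ∈ B, ⨆ x' ∈ A, d x' x) := hcomm _ _
        _ ≤ ⨅ x ∈ C, ⨆ x' ∈ A, d x' x := this
end

section
/- Let V be a commutative quantale, X a V-category, and S_n the symmetric group on n letters. On multisets of size n of objects of X (equivalence classes of n-tuples under permutation), define M([x'₁,…,x'ₙ],[x₁,…,xₙ]) = ⋁_{σ ∈ Sₙ} ⋀ᵢ X(x'ᵢ, x_{σ(i)}). Then M is well-defined on equivalence classes and gives a V-category structure on size-n multisets of objects of X (the matching distance). -/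
/-- the matching distance on multisets (size-n tuples up to permutation)
is well defined and a V-category structure. -/
theorem multiset_matching_distance {V X : Type*} (n : ℕ) [CompleteLattice V]
    (t : V → V → V) (e : V) (d : X → X → V)
    (hcomm : ∀ a b, t a b = t b a)
    (hassoc : ∀ a b c, t (t a b) c = t a (t b c))
    (hunit : ∀ a, t e a = a)
    (hsup : ∀ (a : V) (S : Set V), t a (sSup S) = ⨆ s ∈ S, t a s)
    (hrefl : ∀ x, e ≤ d x x)
    (htrans : ∀ x y z, t (d x y) (d y z) ≤ d x z) :
    (∀ (x y : Fin n → X) (π ρ : Equiv.Perm (Fin n)),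
        (⨆ σ : Equiv.Perm (Fin n), ⨅ i, d (x (π i)) (y (ρ (σ i)))) =
          ⨆ σ : Equiv.Perm (Fin n), ⨅ i, d (x i) (y (σ i))) ∧
    (∀ x : Fin n → X, e ≤ ⨆ σ : Equiv.Perm (Fin n), ⨅ i, d (x i) (x (σ i))) ∧
    (∀ x y z : Fin n → X,
        t (⨆ σ : Equiv.Perm (Fin n), ⨅ i, d (x i) (y (σ i)))
          (⨆ σ : Equiv.Perm (Fin n), ⨅ i, d (y i) (z (σ i))) ≤
        ⨆ σ : Equiv.Perm (Fin n), ⨅ i, d (x i) (z (σ i))) := by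
  -- t distributes over indexed suprema
  have hsup' : ∀ (a : V) {ι : Type _} (f : ι → V),
      t a (⨆ j, f j) = ⨆ j, t a (f j) := by
    intro a ι f
    have h := hsup a (Set.range f)
    rw [sSup_range] at h
    rw [h, iSup_range]
  have hmono : ∀ (a : V) {u v : V}, u ≤ v → t a u ≤ t a v := by
    intro a u v h
    have heq := hsup' a (fun b : Bool => if b then u else v)
    have hv : (⨆ b : Bool, if b then u else v) = v := by
      apply le_antisymm
      · exact iSup_le fun b => by cases b <;> simp [h]
      · exact le_iSup_of_le false (by simp)
    rw [hv] at heq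
    rw [heq]
    exact le_iSup_of_le true (by simp)
  refine ⟨?_, ?_, ?_⟩
  · intro x y π ρ
    have reidx : ∀ (σ : Equiv.Perm (Fin n)),
        (⨅ i, d (x (π i)) (y (ρ (σ i)))) = ⨅ i, d (x i) (y ((ρ * σ * π⁻¹) i)) := by
      intro σ
      rw [← Equiv.iInf_comp (g := fun i => d (x i) (y ((ρ * σ * π⁻¹) i))) π]
      simp [Equiv.Perm.mul_apply]
    apply le_antisymm
    · refine iSup_le fun σ => ?_
      rw [reidx σ]
      exact le_iSup (fun τ : Equiv.Perm (Fin n) => ⨅ i, d (x i) (y (τ i))) _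
    · refine iSup_le fun τ => ?_
      refine le_iSup_of_le (ρ⁻¹ * τ * π) ?_
      rw [reidx]
      simp
  · intro x
    refine le_iSup_of_le 1 ?_
    exact le_iInf fun i => by simpa using hrefl (x i)
  · intro x y z
    rw [hsup']
    refine iSup_le fun τ => ?_
    rw [hcomm, hsup']
    refine iSup_le fun σ => ?_
    refine le_iSup_of_le (τ * σ) (le_iInf fun i => ?_)
    have h1 : t (⨅ j, d (y j) (z (τ j))) (⨅ j, d (x j) (y (σ j))) ≤
        t (d (y (σ i)) (z (τ (σ i)))) (d (x i) (y (σ i))) := by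
      calc t (⨅ j, d (y j) (z (τ j))) (⨅ j, d (x j) (y (σ j)))
          ≤ t (⨅ j, d (y j) (z (τ j))) (d (x i) (y (σ i))) :=
            hmono _ (iInf_le _ i)
        _ = t (d (x i) (y (σ i))) (⨅ j, d (y j) (z (τ j))) := hcomm _ _
        _ ≤ t (d (x i) (y (σ i))) (d (y (σ i)) (z (τ (σ i)))) :=
            hmono _ (iInf_le _ (σ i))
        _ = t (d (y (σ i)) (z (τ (σ i)))) (d (x i) (y (σ i))) := hcomm _ _
    calc t (⨅ j, d (y j) (z (τ j))) (⨅ j, d (x j) (y (σ j)))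
        ≤ t (d (y (σ i)) (z (τ (σ i)))) (d (x i) (y (σ i))) := h1
      _ = t (d (x i) (y (σ i))) (d (y (σ i)) (z (τ (σ i)))) := hcomm _ _
      _ ≤ d (x i) (z (τ (σ i))) := htrans _ _ _
      _ = d (x i) (z ((τ * σ) i)) := rfl
end
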